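/- Let f : R^n → R be C³ on B(x⁰, Δ̄) with Hessian Lipschitz constant L. Let X = ⟨x⁰, x¹, …, xᵐ⟩ with dⁱ = xⁱ − x⁰, radius Δ = maxᵢ‖dⁱ‖ < Δ̄, all x⁰±dⁱ in the ball, and suppose S = [d¹ ⋯ dᵐ] has rank n (determined or overdetermined case). Define the generalized centred simplex gradient ∇ᶜf(X) = (Sᵀ)† δᶜ, where δᶜ has entries (f(x⁰+dⁱ)−f(x⁰−dⁱ))/2. Then ‖∇ᶜf(X) − ∇f(x⁰)‖ ≤ (L√m/6)‖(Ŝᵀ)†‖ Δ², where Ŝ = S/Δ. -/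

import Mathlib

open Metric Matrix

/-- `B` is the Moore–Penrose pseudoinverse of `A`: the four Penrose equations. -/
def IsMPInv {n m : Type*} [Fintype n] [Fintype m]
    (A : Matrix n m ℝ) (B : Matrix m n ℝ) : Prop :=
  A * B * A = A ∧ B * A * B = B ∧ (A * B)ᵀ = A * B ∧ (B * A)ᵀ = B * A

/-- The ℓ²→ℓ² operator (spectral) norm of a real matrix. -/
noncomputable def opNorm {a b : ℕ} (A : Matrix (Fin a) (Fin b) ℝ) : ℝ :=
  ‖LinearMap.toContinuousLinearMap (Matrix.toEuclideanLin A)‖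


theorem sym_taylor_bound {E : Type*} [NormedAddCommGroup E] [NormedSpace ℝ E]
    (f : E → ℝ) (x₀ : E) (Δbar L : ℝ) (hL0 : 0 ≤ L)
    (hf : ContDiffOn ℝ 3 f (ball x₀ Δbar))
    (hL : ∀ x ∈ ball x₀ Δbar, ∀ y ∈ ball x₀ Δbar,
      ‖fderiv ℝ (fderiv ℝ f) x - fderiv ℝ (fderiv ℝ f) y‖ ≤ L * ‖x - y‖)
    (u : E) (hu : ‖u‖ < Δbar) :
    |(f (x₀ + u) - f (x₀ - u)) / 2 - fderiv ℝ f x₀ u| ≤ L * ‖u‖ ^ 3 / 6 := by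
  classical
  set H := fderiv ℝ (fderiv ℝ f) with hHdef
  set p : ℝ → E := fun t => x₀ + t • u with hpdef
  have hmem : ∀ t : ℝ, |t| ≤ 1 → p t ∈ ball x₀ Δbar := by
    intro t ht
    have : ‖p t - x₀‖ = |t| * ‖u‖ := by
      simp [hpdef, norm_smul, Real.norm_eq_abs]
    refine mem_ball_iff_norm.mpr ?_
    rw [this]
    calc |t| * ‖u‖ ≤ 1 * ‖u‖ := by
          exact mul_le_mul_of_nonneg_right ht (norm_nonneg u)
      _ = ‖u‖ := one_mul _
      _ < Δbar := hu
  have hcd : ∀ z ∈ ball x₀ Δbar, ContDiffAt ℝ 3 f z := fun z hz =>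
    hf.contDiffAt (isOpen_ball.mem_nhds hz)
  have hdf : ∀ z ∈ ball x₀ Δbar, HasFDerivAt f (fderiv ℝ f z) z := fun z hz =>
    ((hcd z hz).differentiableAt (by norm_num)).hasFDerivAt
  have hcd1 : ∀ z ∈ ball x₀ Δbar, ContDiffAt ℝ 2 (fderiv ℝ f) z := fun z hz =>
    (hcd z hz).fderiv_right (by norm_num)
  have hdf2 : ∀ z ∈ ball x₀ Δbar, HasFDerivAt (fderiv ℝ f) (H z) z := fun z hz =>
    ((hcd1 z hz).differentiableAt (by norm_num)).hasFDerivAt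
  have hcontH : ∀ z ∈ ball x₀ Δbar, ContinuousAt H z := fun z hz =>
    ((hcd1 z hz).fderiv_right (m := 1) (by norm_num)).continuousAt
  have hcontDf : ∀ z ∈ ball x₀ Δbar, ContinuousAt (fderiv ℝ f) z := fun z hz =>
    (hcd1 z hz).continuousAt
  have hdp : ∀ t : ℝ, HasDerivAt p u t := by
    intro t
    have : HasDerivAt (fun t : ℝ => t • u) ((1:ℝ) • u) t := (hasDerivAt_id t).smul_const u
    simpa [hpdef] using this.const_add x₀
  have hdpneg : ∀ t : ℝ, HasDerivAt (fun t => p (-t)) (-u) t := by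
    intro t
    have h1 : HasDerivAt (fun s : ℝ => -s) (-1 : ℝ) t := (hasDerivAt_id t).neg
    have := (hdp (-t)).scomp t h1
    simpa [Function.comp_def] using this
  have hcontp : Continuous p := by
    simp only [hpdef]
    exact continuous_const.add (continuous_id.smul continuous_const)
  -- G
  set G : ℝ → (E →L[ℝ] ℝ) := fun s => fderiv ℝ f (p s) + fderiv ℝ f (p (-s)) with hGdef
  have hG0 : G 0 = fderiv ℝ f x₀ + fderiv ℝ f x₀ := by simp [hGdef, hpdef]
  have hGderiv : ∀ s : ℝ, |s| ≤ 1 → HasDerivAt G (H (p s) u - H (p (-s)) u) s := by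
    intro s hs
    have hm1 := hmem s hs
    have hm2 := hmem (-s) (by simpa using hs)
    have h1 : HasDerivAt (fun s => fderiv ℝ f (p s)) (H (p s) u) s :=
      (hdf2 _ hm1).comp_hasDerivAt s (hdp s)
    have h2 : HasDerivAt (fun s => fderiv ℝ f (p (-s))) (H (p (-s)) (-u)) s :=
      (hdf2 _ hm2).comp_hasDerivAt s (hdpneg s)
    have := h1.add h2
    rw [map_neg, ← sub_eq_add_neg] at this
    exact this
  have hGbound : ∀ s : ℝ, 0 ≤ s → |s| ≤ 1 →
      ‖H (p s) u - H (p (-s)) u‖ ≤ 2 * L * ‖u‖ ^ 2 * s := by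
    intro s hs0 hs
    have hm1 := hmem s hs
    have hm2 := hmem (-s) (by simpa using hs)
    have h1 : H (p s) u - H (p (-s)) u = (H (p s) - H (p (-s))) u := by
      simp [ContinuousLinearMap.sub_apply]
    rw [h1]
    have h2 : ‖(H (p s) - H (p (-s))) u‖ ≤ ‖H (p s) - H (p (-s))‖ * ‖u‖ :=
      (H (p s) - H (p (-s))).le_opNorm u
    have h3 : ‖H (p s) - H (p (-s))‖ ≤ L * (2 * s * ‖u‖) := by
      have := hL _ hm1 _ hm2
      have hps : p s - p (-s) = (2 * s) • u := by
        simp [hpdef]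
        module
      rw [hps, norm_smul, Real.norm_eq_abs, abs_of_nonneg (by positivity)] at this
      linarith [this]
    calc ‖(H (p s) - H (p (-s))) u‖ ≤ ‖H (p s) - H (p (-s))‖ * ‖u‖ := h2
      _ ≤ L * (2 * s * ‖u‖) * ‖u‖ := by
          exact mul_le_mul_of_nonneg_right h3 (norm_nonneg u)
      _ = 2 * L * ‖u‖ ^ 2 * s := by ring
  -- integrate G'
  have hGdiff : ∀ t : ℝ, t ∈ Set.Icc (0:ℝ) 1 → ‖G t - G 0‖ ≤ L * ‖u‖ ^ 2 * t ^ 2 := by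
    intro t ht
    have habs : ∀ s ∈ Set.uIcc (0:ℝ) t, |s| ≤ 1 := by
      intro s hs
      rw [Set.uIcc_of_le ht.1] at hs
      rw [abs_of_nonneg hs.1]
      exact le_trans hs.2 ht.2
    have hderiv : ∀ s ∈ Set.uIcc (0:ℝ) t,
        HasDerivAt G (H (p s) u - H (p (-s)) u) s := fun s hs =>
      hGderiv s (habs s hs)
    have hcont : ContinuousOn (fun s => H (p s) u - H (p (-s)) u) (Set.uIcc 0 t) := by
      intro s hs
      have happ : Continuous (fun T : E →L[ℝ] E →L[ℝ] ℝ => (T u : E →L[ℝ] ℝ)) :=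
        (ContinuousLinearMap.apply ℝ (E →L[ℝ] ℝ) u).continuous
      have h1 : ContinuousAt (fun s => H (p s) u) s :=
        (happ.continuousAt).comp
          ((hcontH _ (hmem s (habs s hs))).comp hcontp.continuousAt)
      have h2 : ContinuousAt (fun s => H (p (-s)) u) s := by
        have hq : ContinuousAt (fun s : ℝ => p (-s)) s :=
          (hcontp.comp continuous_neg).continuousAt
        exact (happ.continuousAt).comp
          (ContinuousAt.comp (f := fun s : ℝ => p (-s)) (x := s)
            (hcontH _ (hmem (-s) (by simpa using habs s hs))) hq)
      exact (h1.sub h2).continuousWithinAt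
    have hint : IntervalIntegrable (fun s => H (p s) u - H (p (-s)) u) MeasureTheory.volume 0 t :=
      hcont.intervalIntegrable
    have heq : ∫ s in (0:ℝ)..t, (H (p s) u - H (p (-s)) u) = G t - G 0 :=
      intervalIntegral.integral_eq_sub_of_hasDerivAt hderiv hint
    rw [← heq]
    have hbound : ‖∫ s in (0:ℝ)..t, (H (p s) u - H (p (-s)) u)‖ ≤
        |∫ s in (0:ℝ)..t, 2 * L * ‖u‖ ^ 2 * s| := by
      refine intervalIntegral.norm_integral_le_abs_of_norm_le ?_ ?_
      · filter_upwards [MeasureTheory.ae_restrict_mem measurableSet_uIoc] with s hs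
        rw [Set.uIoc_of_le ht.1] at hs
        exact hGbound s hs.1.le (by rw [abs_of_nonneg hs.1.le]; exact le_trans hs.2 ht.2)
      · exact (continuous_const.mul continuous_id).intervalIntegrable 0 t
    refine le_trans hbound ?_
    have : ∫ s in (0:ℝ)..t, 2 * L * ‖u‖ ^ 2 * s = 2 * L * ‖u‖ ^ 2 * (t ^ 2 / 2) := by
      rw [intervalIntegral.integral_const_mul, integral_id]
      ring
    rw [this, abs_of_nonneg (by positivity)]
    exact le_of_eq (by ring)
  -- the function g
  set c : ℝ := fderiv ℝ f x₀ u with hcdef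
  set g : ℝ → ℝ := fun t => f (p t) - f (p (-t)) - 2 * t * c with hgdef
  have hgderiv : ∀ t : ℝ, |t| ≤ 1 → HasDerivAt g ((G t - G 0) u) t := by
    intro t ht
    have hm1 := hmem t ht
    have hm2 := hmem (-t) (by simpa using ht)
    have h1 : HasDerivAt (fun t => f (p t)) (fderiv ℝ f (p t) u) t :=
      (hdf _ hm1).comp_hasDerivAt t (hdp t)
    have h2 : HasDerivAt (fun t => f (p (-t))) (fderiv ℝ f (p (-t)) (-u)) t :=
      (hdf _ hm2).comp_hasDerivAt t (hdpneg t)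
    have h3 : HasDerivAt (fun t : ℝ => 2 * t * c) (2 * c) t := by
      have h4 : HasDerivAt (fun t : ℝ => 2 * t) 2 t := by
        simpa using (hasDerivAt_id t).const_mul (2 : ℝ)
      simpa [mul_assoc] using h4.mul_const c
    have h5 := (h1.sub h2).sub h3
    have heq : fderiv ℝ f (p t) u - fderiv ℝ f (p (-t)) (-u) - 2 * c = (G t - G 0) u := by
      have hp0 : p 0 = x₀ := by simp [hpdef]
      simp only [hGdef, neg_zero, hp0, ContinuousLinearMap.sub_apply,
        ContinuousLinearMap.add_apply, map_neg, hcdef]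
      ring
    rw [heq] at h5
    exact h5
  have habs1 : ∀ t ∈ Set.uIcc (0:ℝ) 1, |t| ≤ 1 := by
    intro t ht
    rw [Set.uIcc_of_le zero_le_one] at ht
    rw [abs_of_nonneg ht.1]
    exact ht.2
  have hcontg : ContinuousOn (fun t => (G t - G 0) u) (Set.uIcc (0:ℝ) 1) := by
    intro t ht
    have happ : Continuous (fun T : E →L[ℝ] ℝ => T u) :=
      (ContinuousLinearMap.apply ℝ ℝ u).continuous
    have h1 : ContinuousAt (fun t => fderiv ℝ f (p t)) t :=
      (hcontDf _ (hmem t (habs1 t ht))).comp hcontp.continuousAt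
    have h2 : ContinuousAt (fun t => fderiv ℝ f (p (-t))) t := by
      have hq : ContinuousAt (fun t : ℝ => p (-t)) t :=
        (hcontp.comp continuous_neg).continuousAt
      exact ContinuousAt.comp (f := fun t : ℝ => p (-t)) (x := t)
        (hcontDf _ (hmem (-t) (by simpa using habs1 t ht))) hq
    have hGc : ContinuousAt G t := by
      exact h1.add h2
    exact ((happ.continuousAt.comp (hGc.sub continuousAt_const))).continuousWithinAt
  have hint : ∫ t in (0:ℝ)..1, (G t - G 0) u = g 1 - g 0 :=
    intervalIntegral.integral_eq_sub_of_hasDerivAt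
      (fun t ht => hgderiv t (habs1 t ht)) hcontg.intervalIntegrable
  have hbd : ‖g 1 - g 0‖ ≤ |∫ t in (0:ℝ)..1, L * ‖u‖ ^ 3 * t ^ 2| := by
    rw [← hint]
    refine intervalIntegral.norm_integral_le_abs_of_norm_le ?_ ?_
    · filter_upwards [MeasureTheory.ae_restrict_mem measurableSet_uIoc] with t ht
      rw [Set.uIoc_of_le zero_le_one] at ht
      have h1 : ‖(G t - G 0) u‖ ≤ ‖G t - G 0‖ * ‖u‖ := (G t - G 0).le_opNorm u
      have h2 : ‖G t - G 0‖ ≤ L * ‖u‖ ^ 2 * t ^ 2 := hGdiff t ⟨ht.1.le, ht.2⟩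
      calc ‖(G t - G 0) u‖ ≤ ‖G t - G 0‖ * ‖u‖ := h1
        _ ≤ L * ‖u‖ ^ 2 * t ^ 2 * ‖u‖ := by
            exact mul_le_mul_of_nonneg_right h2 (norm_nonneg u)
        _ = L * ‖u‖ ^ 3 * t ^ 2 := by ring
    · exact (continuous_const.mul (continuous_pow 2)).intervalIntegrable 0 1
  have hval : ∫ t in (0:ℝ)..1, L * ‖u‖ ^ 3 * t ^ 2 = L * ‖u‖ ^ 3 / 3 := by
    rw [intervalIntegral.integral_const_mul, integral_pow]
    norm_num [mul_one_div]
  rw [hval] at hbd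
  have hg0 : g 0 = 0 := by simp [hgdef, hpdef]
  have hg1 : g 1 = f (x₀ + u) - f (x₀ - u) - 2 * c := by
    simp [hgdef, hpdef, sub_eq_add_neg]
  have htarget : (f (x₀ + u) - f (x₀ - u)) / 2 - c = g 1 / 2 := by
    rw [hg1]; ring
  rw [hcdef] at htarget
  rw [htarget, abs_div]
  rw [hg0, sub_zero, Real.norm_eq_abs, abs_of_nonneg (by positivity : (0:ℝ) ≤ L * ‖u‖ ^ 3 / 3)] at hbd
  rw [abs_of_nonneg (by norm_num : (0:ℝ) ≤ 2)]
  linarith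

/-- GCSG error bound in the determined and overdetermined cases:
if `S = [d¹ ⋯ dᵐ]` has rank `n`, `P = (Sᵀ)†` and `∇ᶜf(X) = P δᶜ`, then
`‖∇ᶜf(X) − ∇f(x⁰)‖ ≤ (L√m/6)‖(Ŝᵀ)†‖Δ²` where `Ŝ = S/Δ` (so `(Ŝᵀ)† = Δ·P`). -/
theorem gcsg_error_bound_overdetermined {n m : ℕ}
    (f : EuclideanSpace ℝ (Fin n) → ℝ)
    (x₀ : EuclideanSpace ℝ (Fin n)) (Δbar L Δ : ℝ)
    (hf : ContDiffOn ℝ 3 f (ball x₀ Δbar))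
    (hL : ∀ x ∈ ball x₀ Δbar, ∀ y ∈ ball x₀ Δbar,
      ‖fderiv ℝ (fderiv ℝ f) x - fderiv ℝ (fderiv ℝ f) y‖ ≤ L * ‖x - y‖)
    (d : Fin m → EuclideanSpace ℝ (Fin n))
    (hΔ : ∀ i, ‖d i‖ ≤ Δ) (hΔpos : 0 < Δ) (hΔbar : Δ < Δbar)
    (S : Matrix (Fin n) (Fin m) ℝ) (hS : S = Matrix.of fun j i => d i j)
    (hrank : S.rank = n)
    (P : Matrix (Fin n) (Fin m) ℝ) (hP : IsMPInv Sᵀ P) :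
    ‖(WithLp.equiv 2 (Fin n → ℝ)).symm fun j =>
        P.mulVec (fun i => (f (x₀ + d i) - f (x₀ - d i)) / 2) j - gradient f x₀ j‖ ≤
      L * Real.sqrt m / 6 * opNorm (Δ • P) * Δ ^ 2 := by
  rcases Nat.eq_zero_or_pos n with hn | hn
  · subst hn
    haveI hss : Subsingleton (EuclideanSpace ℝ (Fin 0)) :=
      ⟨fun a b => by ext i; exact Fin.elim0 i⟩
    have hzero : ((WithLp.equiv 2 (Fin 0 → ℝ)).symm fun j =>
        P.mulVec (fun i => (f (x₀ + d i) - f (x₀ - d i)) / 2) j - gradient f x₀ j)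
        = (0 : EuclideanSpace ℝ (Fin 0)) := Subsingleton.elim _ _
    rw [hzero, norm_zero]
    have hop0 : opNorm (Δ • P) = 0 := by
      rw [opNorm]
      have h1 : LinearMap.toContinuousLinearMap (Matrix.toEuclideanLin (Δ • P)) = 0 := by
        apply ContinuousLinearMap.ext
        intro x
        exact Subsingleton.elim _ _
      rw [h1, norm_zero]
    rw [hop0, mul_zero, zero_mul]
  · have hΔbar0 : (0:ℝ) < Δbar := lt_trans hΔpos hΔbar
    have hball : x₀ ∈ ball x₀ Δbar := mem_ball_self hΔbar0
    -- L is nonnegative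
    have hL0 : 0 ≤ L := by
      have i0 : Fin n := ⟨0, hn⟩
      set y : EuclideanSpace ℝ (Fin n) :=
        x₀ + (Δbar / 2) • EuclideanSpace.single i0 (1:ℝ) with hy
      have hynorm : ‖x₀ - y‖ = Δbar / 2 := by
        have : x₀ - y = -((Δbar / 2) • EuclideanSpace.single i0 (1:ℝ)) := by
          rw [hy]; abel
        rw [this, norm_neg, norm_smul, EuclideanSpace.norm_single]
        simp [abs_of_pos, hΔbar0, abs_of_nonneg (by linarith : (0:ℝ) ≤ Δbar / 2)]
      have hymem : y ∈ ball x₀ Δbar := by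
        rw [mem_ball_iff_norm, ← norm_neg]
        have : -(y - x₀) = x₀ - y := by abel
        rw [this, hynorm]
        linarith
      have h := hL x₀ hball y hymem
      rw [hynorm] at h
      nlinarith [norm_nonneg (fderiv ℝ (fderiv ℝ f) x₀ - fderiv ℝ (fderiv ℝ f) y)]
    set grad : EuclideanSpace ℝ (Fin n) := gradient f x₀ with hgrad
    set w : Fin n → ℝ := fun j => grad j with hw
    set δ : Fin m → ℝ := fun i => (f (x₀ + d i) - f (x₀ - d i)) / 2 with hδ
    -- P * Sᵀ = 1
    have hrankT : (Sᵀ).rank = n := by rw [Matrix.rank_transpose]; exact hrank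
    have hker : LinearMap.ker (Sᵀ).mulVecLin = ⊥ := by
      have h1 := LinearMap.finrank_range_add_finrank_ker (Sᵀ).mulVecLin
      have h2 : Module.finrank ℝ (LinearMap.range (Sᵀ).mulVecLin) = n := hrankT
      rw [h2, Module.finrank_fin_fun] at h1
      have h3 : Module.finrank ℝ (LinearMap.ker (Sᵀ).mulVecLin) = 0 := by omega
      exact Submodule.finrank_eq_zero.mp h3
    have hinj : Function.Injective (Sᵀ).mulVecLin := LinearMap.ker_eq_bot.mp hker
    have hPA : P * Sᵀ = 1 := by
      apply Matrix.toLin'.injective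
      apply LinearMap.ext
      intro v
      apply hinj
      show (Sᵀ).mulVecLin (Matrix.toLin' (P * Sᵀ) v) = (Sᵀ).mulVecLin (Matrix.toLin' 1 v)
      rw [Matrix.toLin'_one]
      simp only [Matrix.mulVecLin_apply, Matrix.toLin'_apply, LinearMap.id_apply]
      rw [Matrix.mulVec_mulVec, ← Matrix.mul_assoc, hP.1]
    -- pointwise bound
    have hST : ∀ i, (Sᵀ *ᵥ w) i = fderiv ℝ f x₀ (d i) := by
      intro i
      have h2 : fderiv ℝ f x₀ (d i) = inner ℝ grad (d i) := by
        rw [hgrad]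
        exact (InnerProductSpace.toDual_symm_apply (𝕜 := ℝ)).symm
      rw [h2, PiLp.inner_apply]
      simp only [RCLike.inner_apply, conj_trivial]
      simp [Matrix.mulVec, dotProduct, hS, mul_comm, hw]
    have hpoint : ∀ i, |δ i - (Sᵀ *ᵥ w) i| ≤ L * Δ ^ 3 / 6 := by
      intro i
      rw [hST i, hδ]
      have h1 := sym_taylor_bound f x₀ Δbar L hL0 hf hL (d i) (lt_of_le_of_lt (hΔ i) hΔbar)
      refine le_trans h1 ?_
      have h2 : ‖d i‖ ^ 3 ≤ Δ ^ 3 := pow_le_pow_left₀ (norm_nonneg _) (hΔ i) 3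
      have : L * ‖d i‖ ^ 3 ≤ L * Δ ^ 3 := mul_le_mul_of_nonneg_left h2 hL0
      linarith
    set e : Fin m → ℝ := δ - Sᵀ *ᵥ w with he
    have hvec : (fun j => P.mulVec δ j - grad j) = P *ᵥ e := by
      funext j
      have h1 : P *ᵥ e = P *ᵥ δ - P *ᵥ (Sᵀ *ᵥ w) := by
        rw [he, Matrix.mulVec_sub]
      have h2 : P *ᵥ (Sᵀ *ᵥ w) = w := by
        rw [Matrix.mulVec_mulVec, hPA, Matrix.one_mulVec]
      rw [h1, h2]
      rfl
    rw [hvec]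
    -- norm bounds
    have hnorm1 : ‖(WithLp.equiv 2 (Fin n → ℝ)).symm (P *ᵥ e)‖ ≤
        opNorm P * ‖(WithLp.equiv 2 (Fin m → ℝ)).symm e‖ := by
      have h := (LinearMap.toContinuousLinearMap (Matrix.toEuclideanLin P)).le_opNorm
        ((WithLp.equiv 2 (Fin m → ℝ)).symm e)
      simpa [opNorm, Matrix.toEuclideanLin_apply_piLp_toLp] using h
    have hnorm2 : ‖(WithLp.equiv 2 (Fin m → ℝ)).symm e‖ ≤ Real.sqrt m * (L * Δ ^ 3 / 6) := by
      rw [EuclideanSpace.norm_eq]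
      have hsum : ∑ i, ‖((WithLp.equiv 2 (Fin m → ℝ)).symm e) i‖ ^ 2 ≤
          ∑ _i : Fin m, (L * Δ ^ 3 / 6) ^ 2 := by
        refine Finset.sum_le_sum fun i _ => ?_
        have h1 : ‖((WithLp.equiv 2 (Fin m → ℝ)).symm e) i‖ = |e i| := rfl
        rw [h1]
        have h2 : |e i| ≤ L * Δ ^ 3 / 6 := hpoint i
        exact pow_le_pow_left₀ (abs_nonneg _) h2 2
      rw [Finset.sum_const, Finset.card_univ, Fintype.card_fin, nsmul_eq_mul] at hsum
      refine le_trans (Real.sqrt_le_sqrt hsum) ?_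
      rw [Real.sqrt_mul (by positivity)]
      have : Real.sqrt ((L * Δ ^ 3 / 6) ^ 2) = L * Δ ^ 3 / 6 :=
        Real.sqrt_sq (by positivity)
      rw [this]
    have hop : opNorm (Δ • P) = Δ * opNorm P := by
      rw [opNorm, opNorm]
      have h1 : Matrix.toEuclideanLin (Δ • P) = Δ • Matrix.toEuclideanLin P :=
        map_smul _ _ _
      rw [h1, _root_.map_smul]
      rw [norm_smul Δ (LinearMap.toContinuousLinearMap (Matrix.toEuclideanLin P)),
        Real.norm_eq_abs, abs_of_pos hΔpos]
    calc ‖(WithLp.equiv 2 (Fin n → ℝ)).symm (P *ᵥ e)‖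
        ≤ opNorm P * ‖(WithLp.equiv 2 (Fin m → ℝ)).symm e‖ := hnorm1
      _ ≤ opNorm P * (Real.sqrt m * (L * Δ ^ 3 / 6)) := by
          exact mul_le_mul_of_nonneg_left hnorm2 (norm_nonneg _)
      _ = L * Real.sqrt m / 6 * opNorm (Δ • P) * Δ ^ 2 := by
          rw [hop]; ring
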